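/- arXiv:2309.01549 — 5 statements merged into one kernel-verified Lean document; each statement's English description precedes it below -/
import Mathlib

section
/- For all h₁, h₂ ∈ H = L²(𝒪;ℝ), the compositions B ∘ h₁ and B ∘ h₂ belong to H, and ⟨B ∘ h₁ − B ∘ h₂, h₁ − h₂⟩_H ≥ (1/γ₁)·‖h₁ − h₂‖_H². -/
open MeasureTheory intervalIntegral

/-- For all `h₁, h₂ ∈ H = L²(𝒪;ℝ)`, the compositions `B ∘ h₁` and `B ∘ h₂`
belong to `H`, and `⟨B∘h₁ − B∘h₂, h₁ − h₂⟩_H ≥ (1/γ₁)·‖h₁ − h₂‖²`. -/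
theorem stmt7
    (d : ℕ) (hd : 1 ≤ d)
    (𝒪 : Set (EuclideanSpace ℝ (Fin d)))
    (h𝒪meas : MeasurableSet 𝒪) (h𝒪bdd : Bornology.IsBounded 𝒪)
    (γ : ℝ → ℝ) (γ₀ γ₁ : ℝ)
    (hγ : ContDiff ℝ 1 γ)
    (hγ₀ : 0 < γ₀)
    (hbound : ∀ r : ℝ, γ₀ ≤ γ r ∧ γ r ≤ γ₁)
    (g ginv : ℝ → ℝ)
    (hg : ∀ r : ℝ, g r = ∫ s in (0:ℝ)..r, γ s)
    (hleft : Function.LeftInverse ginv g)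
    (hright : Function.RightInverse ginv g)
    (b B : ℝ → ℝ)
    (hb : ∀ r : ℝ, b r = 1 / γ (ginv r))
    (hB : ∀ r : ℝ, B r = ∫ s in (0:ℝ)..r, b s)
    (h₁ h₂ : Lp ℝ 2 (volume.restrict 𝒪)) :
    MemLp (fun x => B (h₁ x)) 2 (volume.restrict 𝒪) ∧
    MemLp (fun x => B (h₂ x)) 2 (volume.restrict 𝒪) ∧
    ∀ Bh₁ Bh₂ : Lp ℝ 2 (volume.restrict 𝒪),
      ⇑Bh₁ =ᵐ[volume.restrict 𝒪] (fun x => B (h₁ x)) →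
      ⇑Bh₂ =ᵐ[volume.restrict 𝒪] (fun x => B (h₂ x)) →
      (1 / γ₁) * ‖h₁ - h₂‖ ^ 2 ≤ (inner ℝ (Bh₁ - Bh₂) (h₁ - h₂) : ℝ) := by
  let μ := volume.restrict 𝒪
  show MemLp (fun x => B (h₁ x)) 2 μ ∧ MemLp (fun x => B (h₂ x)) 2 μ ∧ _
  have hγ₁pos : 0 < γ₁ := lt_of_lt_of_le hγ₀ ((hbound 0).1.trans (hbound 0).2)
  have hγc : Continuous γ := hγ.continuous
  -- `g` grows at rate at least `γ₀`
  have hgdiff : ∀ x y : ℝ, x ≤ y → γ₀ * (y - x) ≤ g y - g x := by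
    intro x y hxy
    rw [hg, hg, intervalIntegral.integral_interval_sub_left
      (hγc.intervalIntegrable 0 y) (hγc.intervalIntegrable 0 x)]
    have := intervalIntegral.integral_mono_on hxy (intervalIntegrable_const (μ := volume))
      (hγc.intervalIntegrable x y) (fun s _ => (hbound s).1)
    simpa [mul_comm] using this
  -- `ginv` is Lipschitz, hence continuous
  have hginvlip : ∀ u v : ℝ, |ginv u - ginv v| ≤ γ₀⁻¹ * |u - v| := by
    intro u v
    rw [← div_eq_inv_mul, le_div_iff₀ hγ₀]
    rcases le_total (ginv u) (ginv v) with h | h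
    · have := hgdiff _ _ h
      rw [hright, hright] at this
      rw [abs_sub_comm, abs_of_nonneg (sub_nonneg.2 h)]
      have h2 : v - u ≤ |u - v| := (abs_sub_comm u v) ▸ le_abs_self _
      nlinarith
    · have := hgdiff _ _ h
      rw [hright, hright] at this
      rw [abs_of_nonneg (sub_nonneg.2 h)]
      have h2 : u - v ≤ |u - v| := le_abs_self _
      nlinarith
  have hginvc : Continuous ginv := by
    have : LipschitzWith ⟨γ₀⁻¹, le_of_lt (inv_pos.2 hγ₀)⟩ ginv := by
      apply LipschitzWith.of_dist_le_mul
      intro u v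
      rw [Real.dist_eq, Real.dist_eq]; exact hginvlip u v
    exact this.continuous
  -- `b` is continuous and bounded between `1/γ₁` and `1/γ₀`
  have hbfun : b = fun r => 1 / γ (ginv r) := funext hb
  have hγne : ∀ r : ℝ, γ (ginv r) ≠ 0 := fun r =>
    ne_of_gt (lt_of_lt_of_le hγ₀ (hbound _).1)
  have hbc : Continuous b := by
    rw [hbfun]
    exact continuous_const.div (hγc.comp hginvc) hγne
  have hblo : ∀ r, 1 / γ₁ ≤ b r := by
    intro r
    rw [hb]
    exact one_div_le_one_div_of_le (lt_of_lt_of_le hγ₀ (hbound _).1) (hbound _).2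
  have hbhi : ∀ r, b r ≤ 1 / γ₀ := by
    intro r
    rw [hb]
    exact one_div_le_one_div_of_le hγ₀ (hbound _).1
  -- bounds on increments of `B`
  have hBdiff : ∀ x y : ℝ, x ≤ y →
      (1 / γ₁) * (y - x) ≤ B y - B x ∧ B y - B x ≤ (1 / γ₀) * (y - x) := by
    intro x y hxy
    rw [hB, hB, intervalIntegral.integral_interval_sub_left
      (hbc.intervalIntegrable 0 y) (hbc.intervalIntegrable 0 x)]
    constructor
    · have := intervalIntegral.integral_mono_on hxy (intervalIntegrable_const (μ := volume))
        (hbc.intervalIntegrable x y) (fun s _ => hblo s)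
      simpa [mul_comm] using this
    · have := intervalIntegral.integral_mono_on hxy (hbc.intervalIntegrable x y)
        (intervalIntegrable_const (μ := volume)) (fun s _ => hbhi s)
      simpa [mul_comm] using this
  -- key pointwise monotonicity inequality
  have hkey : ∀ x y : ℝ, (1 / γ₁) * ((x - y) * (x - y)) ≤ (B x - B y) * (x - y) := by
    intro x y
    rcases le_total y x with h | h
    · have := (hBdiff y x h).1
      nlinarith [sub_nonneg.2 h]
    · have := (hBdiff x y h).1
      nlinarith [sub_nonneg.2 h]
  -- B is Lipschitz
  have hB0 : B 0 = 0 := by rw [hB]; exact intervalIntegral.integral_same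
  have hBlip : ∀ x y : ℝ, |B x - B y| ≤ (1 / γ₀) * |x - y| := by
    intro x y
    rcases le_total y x with h | h
    · obtain ⟨h1, h2⟩ := hBdiff y x h
      rw [abs_of_nonneg (by nlinarith [one_div_pos.2 hγ₁pos, sub_nonneg.2 h] :
          (0:ℝ) ≤ B x - B y), abs_of_nonneg (sub_nonneg.2 h)]
      exact h2
    · obtain ⟨h1, h2⟩ := hBdiff x y h
      rw [abs_sub_comm, abs_sub_comm x y,
        abs_of_nonneg (by nlinarith [one_div_pos.2 hγ₁pos, sub_nonneg.2 h] :
          (0:ℝ) ≤ B y - B x), abs_of_nonneg (sub_nonneg.2 h)]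
      exact h2
  have hBabs : ∀ r : ℝ, |B r| ≤ (1 / γ₀) * |r| := by
    intro r
    simpa [hB0] using hBlip r 0
  have hBc : Continuous B := by
    have : LipschitzWith ⟨1 / γ₀, by positivity⟩ B := by
      apply LipschitzWith.of_dist_le_mul
      intro u v
      rw [Real.dist_eq, Real.dist_eq]; exact hBlip u v
    exact this.continuous
  -- membership in L²
  have hmem : ∀ h : Lp ℝ 2 μ, MemLp (fun x => B (h x)) 2 μ := by
    intro h
    have hmeas : AEStronglyMeasurable (fun x => B (h x)) μ :=
      hBc.comp_aestronglyMeasurable (Lp.aestronglyMeasurable h)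
    refine MemLp.of_le ((Lp.memLp h).const_mul (1 / γ₀)) hmeas ?_
    filter_upwards with x
    have := hBabs (h x)
    calc ‖B (h x)‖ = |B (h x)| := rfl
      _ ≤ (1 / γ₀) * |h x| := this
      _ = ‖(1 / γ₀) * h x‖ := by
          rw [norm_mul, Real.norm_eq_abs, Real.norm_eq_abs,
            abs_of_pos (one_div_pos.2 hγ₀)]
  refine ⟨hmem h₁, hmem h₂, ?_⟩
  intro Bh₁ Bh₂ he₁ he₂
  have hu : ⇑(h₁ - h₂) =ᵐ[μ] fun x => h₁ x - h₂ x := Lp.coeFn_sub h₁ h₂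
  have hv : ⇑(Bh₁ - Bh₂) =ᵐ[μ] fun x => B (h₁ x) - B (h₂ x) :=
    (Lp.coeFn_sub Bh₁ Bh₂).trans (he₁.sub he₂)
  have hinner : (inner ℝ (Bh₁ - Bh₂) (h₁ - h₂) : ℝ)
      = ∫ x, (Bh₁ - Bh₂) x * (h₁ - h₂) x ∂μ := by
    rw [L2.inner_def]; simp [RCLike.inner_apply, mul_comm, μ]
  have hnorm : ‖h₁ - h₂‖ ^ 2 = ∫ x, (h₁ - h₂) x * (h₁ - h₂) x ∂μ := by
    rw [← real_inner_self_eq_norm_sq, L2.inner_def]; simp [RCLike.inner_apply, sq, μ]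
  rw [hinner, hnorm, ← MeasureTheory.integral_const_mul]
  have hint1 : Integrable (fun x => (h₁ - h₂) x * (h₁ - h₂) x) μ := by
    simpa [RCLike.inner_apply, sq, μ] using L2.integrable_inner (𝕜 := ℝ) (h₁ - h₂) (h₁ - h₂)
  have hint2 : Integrable (fun x => (Bh₁ - Bh₂) x * (h₁ - h₂) x) μ := by
    simpa [RCLike.inner_apply, mul_comm, μ] using L2.integrable_inner (𝕜 := ℝ) (Bh₁ - Bh₂) (h₁ - h₂)
  apply integral_mono_ae (hint1.const_mul _) hint2
  filter_upwards [hu, hv] with x hux hvx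
  rw [hux, hvx]
  exact hkey (h₁ x) (h₂ x)
end

section
/- The functional Λ : H → ℝ defined by Λ(h) = ∫_𝒪 𝔣(x, h(x)) dx, where 𝔣(x,r) = ∫₀^r f(x,s) ds, is well defined and Fréchet differentiable at every h ∈ H = L²(𝒪;ℝ), with derivative DΛ(h) given by k ↦ ⟨F(h), k⟩_H, where F(h)(x) := f(x, h(x)); moreover the quantitative remainder bound |Λ(h + k) − Λ(h) − ⟨F(h), k⟩_H| ≤ (L_f/2)·‖k‖_H² holds for all h, k ∈ H. -/
open MeasureTheory intervalIntegral

/-- The functional `Λ(h) = ∫_𝒪 𝔣(x, h(x)) dx`, with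
`𝔣(x,r) = ∫₀^r f(x,s) ds`, is well defined and Fréchet differentiable at every `h ∈ L²(𝒪;ℝ)`,
with derivative `k ↦ ⟨F(h), k⟩_H` where `F(h)(x) = f(x, h(x))`; moreover
`|Λ(h + k) − Λ(h) − ⟨F(h), k⟩| ≤ (L_f/2)·‖k‖²` for all `k`. -/
theorem stmt9
    (d : ℕ) (hd : 1 ≤ d)
    (𝒪 : Set (EuclideanSpace ℝ (Fin d)))
    (h𝒪meas : MeasurableSet 𝒪) (h𝒪bdd : Bornology.IsBounded 𝒪)
    (f : EuclideanSpace ℝ (Fin d) → ℝ → ℝ)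
    (hfmeas : Measurable (Function.uncurry f))
    (Lf M : ℝ) (hLf : 0 ≤ Lf) (hM : 0 ≤ M)
    (hlip : ∀ x ∈ 𝒪, ∀ r s : ℝ, |f x r - f x s| ≤ Lf * |r - s|)
    (hM0 : ∀ x ∈ 𝒪, |f x 0| ≤ M)
    (ff : EuclideanSpace ℝ (Fin d) → ℝ → ℝ)
    (hff : ∀ x r, ff x r = ∫ s in (0:ℝ)..r, f x s)
    (Λ : Lp ℝ 2 (volume.restrict 𝒪) → ℝ)
    (hΛ : ∀ h : Lp ℝ 2 (volume.restrict 𝒪), Λ h = ∫ x, ff x (h x) ∂(volume.restrict 𝒪))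
    (h Fh : Lp ℝ 2 (volume.restrict 𝒪))
    (hFh : ⇑Fh =ᵐ[volume.restrict 𝒪] fun x => f x (h x)) :
    Integrable (fun x => ff x (h x)) (volume.restrict 𝒪) ∧
    HasFDerivAt Λ (innerSL ℝ Fh) h ∧
    ∀ k : Lp ℝ 2 (volume.restrict 𝒪),
      |Λ (h + k) - Λ h - (inner ℝ Fh k : ℝ)| ≤ (Lf / 2) * ‖k‖ ^ 2 := by
  haveI hfin : IsFiniteMeasure (volume.restrict 𝒪) :=
    ⟨by rw [Measure.restrict_apply_univ]; exact h𝒪bdd.measure_lt_top⟩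
  -- continuity and interval integrability of `f x` for `x ∈ 𝒪`
  have hcont : ∀ x ∈ 𝒪, Continuous (f x) := by
    intro x hx
    have : LipschitzWith (Real.toNNReal Lf) (f x) := by
      apply LipschitzWith.of_dist_le_mul
      intro a b
      rw [Real.dist_eq, Real.dist_eq, Real.coe_toNNReal _ hLf]
      exact hlip x hx a b
    exact this.continuous
  have hii : ∀ x ∈ 𝒪, ∀ a b : ℝ, IntervalIntegrable (f x) volume a b := fun x hx a b =>
    (hcont x hx).intervalIntegrable a b
  -- pointwise growth bound
  have hffbd : ∀ x ∈ 𝒪, ∀ r : ℝ, |ff x r| ≤ M * |r| + Lf * r ^ 2 := by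
    intro x hx r
    rw [hff]
    have hb : ∀ s ∈ Set.uIoc (0:ℝ) r, ‖f x s‖ ≤ M + Lf * |r| := by
      intro s hs
      have hsr : |s| ≤ |r| := by
        rcases Set.mem_uIoc.mp hs with ⟨h1, h2⟩ | ⟨h1, h2⟩
        · rw [abs_of_pos h1]; exact h2.trans (le_abs_self r)
        · rw [abs_of_nonpos h2]; exact (neg_le_neg h1.le).trans (neg_le_abs r)
      calc ‖f x s‖ = |f x s - f x 0 + f x 0| := by norm_num
        _ ≤ |f x s - f x 0| + |f x 0| := abs_add_le _ _
        _ ≤ Lf * |s - 0| + M := add_le_add (hlip x hx s 0) (hM0 x hx)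
        _ ≤ M + Lf * |r| := by
            rw [sub_zero]
            have := mul_le_mul_of_nonneg_left hsr hLf
            linarith
    calc |∫ s in (0:ℝ)..r, f x s| ≤ (M + Lf * |r|) * |r - 0| :=
          intervalIntegral.norm_integral_le_of_norm_le_const hb
      _ = M * |r| + Lf * r ^ 2 := by
          rw [sub_zero, add_mul, mul_assoc, abs_mul_abs_self]; ring
  -- value of ∫₀^c |u| du
  have habs : ∀ c : ℝ, (∫ u in (0:ℝ)..c, |u|) = |c| * c / 2 := by
    intro c
    rcases le_or_gt 0 c with hc | hc
    · have e : Set.EqOn (fun u : ℝ => |u|) (fun u => u) (Set.uIcc 0 c) := by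
        intro u hu; rw [Set.uIcc_of_le hc] at hu; exact abs_of_nonneg hu.1
      rw [intervalIntegral.integral_congr e, integral_id, abs_of_nonneg hc]; ring
    · have e : Set.EqOn (fun u : ℝ => |u|) (fun u => -u) (Set.uIcc 0 c) := by
        intro u hu; rw [Set.uIcc_of_ge hc.le] at hu; exact abs_of_nonpos hu.2
      rw [intervalIntegral.integral_congr e]
      rw [show (∫ u in (0:ℝ)..c, -u) = -∫ u in (0:ℝ)..c, u from intervalIntegral.integral_neg]
      rw [integral_id, abs_of_neg hc]; ring
  -- sharp pointwise Taylor-remainder bound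
  have hkey : ∀ x ∈ 𝒪, ∀ a b : ℝ, |ff x (a + b) - ff x a - f x a * b| ≤ Lf / 2 * b ^ 2 := by
    intro x hx a b
    rw [hff, hff]
    have h1 : (∫ s in (0:ℝ)..a, f x s) + ∫ s in a..(a + b), f x s
        = ∫ s in (0:ℝ)..(a + b), f x s :=
      integral_add_adjacent_intervals (hii x hx 0 a) (hii x hx a (a + b))
    have h2 : f x a * b = ∫ s in a..(a + b), f x a := by
      rw [intervalIntegral.integral_const, smul_eq_mul]; ring
    have h3 : (∫ s in (0:ℝ)..(a + b), f x s) - (∫ s in (0:ℝ)..a, f x s) - f x a * b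
        = ∫ s in a..(a + b), (f x s - f x a) := by
      rw [← h1, h2, intervalIntegral.integral_sub (hii x hx a (a + b))
        intervalIntegrable_const]
      ring
    rw [h3]
    have hgint : IntervalIntegrable (fun s => Lf * abs (s - a)) volume a (a + b) :=
      (continuous_const.mul ((continuous_id.sub continuous_const).abs)).intervalIntegrable a (a + b)
    have h4 : ‖∫ s in a..(a + b), (f x s - f x a)‖ ≤ |∫ s in a..(a + b), Lf * abs (s - a)| := by
      apply intervalIntegral.norm_integral_le_abs_of_norm_le _ hgint
      filter_upwards with t
      simpa [Real.norm_eq_abs] using hlip x hx t a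
    have h5 : (∫ s in a..(a + b), Lf * abs (s - a)) = Lf * (|b| * b / 2) := by
      rw [intervalIntegral.integral_const_mul]
      have := intervalIntegral.integral_comp_sub_right (a := a) (b := a + b)
        (fun u : ℝ => |u|) a
      simp only [sub_self, add_sub_cancel_left] at this
      rw [this, habs b]
    have h6 : |Lf * (|b| * b / 2)| = Lf / 2 * b ^ 2 := by
      rcases le_or_gt 0 b with hb | hb
      · rw [abs_of_nonneg hb, abs_of_nonneg (by positivity)]; ring
      · rw [abs_of_neg hb, show Lf * (-b * b / 2) = -(Lf * (b * b) / 2) by ring,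
          abs_of_nonpos (neg_nonpos.mpr
            (div_nonneg (mul_nonneg hLf (mul_self_nonneg b)) (by norm_num)))]
        ring
    calc |∫ s in a..(a + b), (f x s - f x a)| ≤ |∫ s in a..(a + b), Lf * abs (s - a)| := h4
      _ = Lf / 2 * b ^ 2 := by rw [h5, h6]
  -- measurability of x ↦ ff x (ϕ x)
  have hmeasff : ∀ ϕ : Lp ℝ 2 (volume.restrict 𝒪), AEStronglyMeasurable (fun x => ff x (ϕ x)) (volume.restrict 𝒪) := by
    intro ϕ
    have hae := (Lp.aestronglyMeasurable ϕ).aemeasurable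
    have hgmeas : Measurable (hae.mk ⇑ϕ) := hae.measurable_mk
    have hgae : ⇑ϕ =ᵐ[volume.restrict 𝒪] hae.mk ⇑ϕ := hae.ae_eq_mk
    set g := hae.mk ⇑ϕ with hgdef
    have key : ∀ u v : EuclideanSpace ℝ (Fin d) → ℝ, Measurable u → Measurable v →
        Measurable fun x => ∫ s in Set.Ioc (u x) (v x), f x s := by
      intro u v hu hv
      have hset : MeasurableSet {p : EuclideanSpace ℝ (Fin d) × ℝ | u p.1 < p.2 ∧ p.2 ≤ v p.1} :=
        (measurableSet_lt (hu.comp measurable_fst) measurable_snd).inter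
          (measurableSet_le measurable_snd (hv.comp measurable_fst))
      have hind : Measurable
          ({p : EuclideanSpace ℝ (Fin d) × ℝ | u p.1 < p.2 ∧ p.2 ≤ v p.1}.indicator
            (Function.uncurry f)) := hfmeas.indicator hset
      have hsm := hind.stronglyMeasurable.integral_prod_right' (ν := volume)
      have heq : (fun x => ∫ s in Set.Ioc (u x) (v x), f x s)
          = fun x => ∫ s, ({p : EuclideanSpace ℝ (Fin d) × ℝ |
              u p.1 < p.2 ∧ p.2 ≤ v p.1}.indicator (Function.uncurry f)) (x, s) := by
        funext x
        rw [← MeasureTheory.integral_indicator measurableSet_Ioc]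
        congr 1
      rw [heq]
      exact hsm.measurable
    have hmg : Measurable fun x => ff x (g x) := by
      have e : (fun x => ff x (g x))
          = fun x => (∫ s in Set.Ioc (0:ℝ) (g x), f x s) - ∫ s in Set.Ioc (g x) (0:ℝ), f x s := by
        funext x
        rw [hff]
        rfl
      rw [e]
      exact (key (fun _ => 0) g measurable_const hgmeas).sub
        (key g (fun _ => 0) hgmeas measurable_const)
    refine hmg.aestronglyMeasurable.congr ?_
    filter_upwards [hgae] with x hx
    rw [hx]
  -- integrability of x ↦ ff x (ϕ x)
  have hint : ∀ ϕ : Lp ℝ 2 (volume.restrict 𝒪), Integrable (fun x => ff x (ϕ x)) (volume.restrict 𝒪) := by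
    intro ϕ
    have h1 : Integrable (fun x => ϕ x) (volume.restrict 𝒪) := (Lp.memLp ϕ).integrable (by norm_num)
    have h2 : Integrable (fun x => (ϕ x) ^ 2) (volume.restrict 𝒪) := (Lp.memLp ϕ).integrable_sq
    refine Integrable.mono' ((h1.abs.const_mul M).add (h2.const_mul Lf)) (hmeasff ϕ) ?_
    filter_upwards [ae_restrict_mem h𝒪meas] with x hx
    simpa [Real.norm_eq_abs] using hffbd x hx (ϕ x)
  -- the quantitative remainder bound
  have hquant : ∀ k : Lp ℝ 2 (volume.restrict 𝒪),
      |Λ (h + k) - Λ h - (inner ℝ Fh k : ℝ)| ≤ Lf / 2 * ‖k‖ ^ 2 := by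
    intro k
    have hk2 : Integrable (fun x => (k x) ^ 2) (volume.restrict 𝒪) := (Lp.memLp k).integrable_sq
    have hA : Integrable (fun x => ff x (h x + k x)) (volume.restrict 𝒪) := by
      refine (hint (h + k)).congr ?_
      filter_upwards [Lp.coeFn_add h k] with x hx
      simp only [hx, Pi.add_apply]
    have hB := hint h
    have hC : Integrable (fun x => f x (h x) * k x) (volume.restrict 𝒪) := by
      have h0 := MeasureTheory.L2.integrable_inner (𝕜 := ℝ) Fh k
      refine h0.congr ?_
      filter_upwards [hFh] with x hx
      simp [RCLike.inner_apply, hx, mul_comm]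
    have hΛ1 : Λ (h + k) = ∫ x, ff x (h x + k x) ∂(volume.restrict 𝒪) := by
      rw [hΛ]
      refine integral_congr_ae ?_
      filter_upwards [Lp.coeFn_add h k] with x hx
      simp only [hx, Pi.add_apply]
    have hinner : (inner ℝ Fh k : ℝ) = ∫ x, f x (h x) * k x ∂(volume.restrict 𝒪) := by
      rw [MeasureTheory.L2.inner_def]
      refine integral_congr_ae ?_
      filter_upwards [hFh] with x hx
      simp [RCLike.inner_apply, hx, mul_comm]
    have hsplit : ∫ x, (ff x (h x + k x) - ff x (h x) - f x (h x) * k x) ∂(volume.restrict 𝒪)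
        = (∫ x, ff x (h x + k x) ∂(volume.restrict 𝒪)) - (∫ x, ff x (h x) ∂(volume.restrict 𝒪))
          - ∫ x, f x (h x) * k x ∂(volume.restrict 𝒪) := by
      have hAB : Integrable (fun x => ff x (h x + k x) - ff x (h x)) (volume.restrict 𝒪) :=
        hA.sub hB
      rw [MeasureTheory.integral_sub hAB hC, MeasureTheory.integral_sub hA hB]
    rw [hΛ1, hΛ h, hinner, ← hsplit]
    have hnorm : ‖∫ x, (ff x (h x + k x) - ff x (h x) - f x (h x) * k x) ∂(volume.restrict 𝒪)‖
        ≤ ∫ x, Lf / 2 * (k x) ^ 2 ∂(volume.restrict 𝒪) := by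
      apply MeasureTheory.norm_integral_le_of_norm_le (hk2.const_mul (Lf / 2))
      filter_upwards [ae_restrict_mem h𝒪meas] with x hx
      simpa [Real.norm_eq_abs] using hkey x hx (h x) (k x)
    have hval : ∫ x, Lf / 2 * (k x) ^ 2 ∂(volume.restrict 𝒪) = Lf / 2 * ‖k‖ ^ 2 := by
      rw [MeasureTheory.integral_const_mul]
      congr 1
      have h1 : (inner ℝ k k : ℝ) = ∫ x, (k x) ^ 2 ∂(volume.restrict 𝒪) := by
        rw [MeasureTheory.L2.inner_def]
        refine integral_congr_ae ?_
        filter_upwards with x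
        simp [RCLike.inner_apply, sq]
      rw [← h1, real_inner_self_eq_norm_sq]
    rw [← hval]
    simpa [Real.norm_eq_abs] using hnorm
  refine ⟨hint h, ?_, hquant⟩
  rw [hasFDerivAt_iff_isLittleO_nhds_zero]
  have hO : (fun k : Lp ℝ 2 (volume.restrict 𝒪) => Λ (h + k) - Λ h - (innerSL ℝ Fh) k)
      =O[nhds 0] fun k => ‖k‖ ^ 2 := by
    apply Asymptotics.IsBigO.of_bound (Lf / 2)
    filter_upwards with k
    have := hquant k
    simpa [Real.norm_eq_abs, abs_pow, innerSL_apply_apply] using this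
  have ho : (fun k : Lp ℝ 2 (volume.restrict 𝒪) => ‖k‖ ^ 2) =o[nhds 0] fun k => k := by
    have h1 : (fun k : Lp ℝ 2 (volume.restrict 𝒪) => ‖k‖ ^ 2) =o[nhds 0] fun k => ‖k‖ := by
      rw [Asymptotics.isLittleO_iff]
      intro c hc
      filter_upwards [Metric.ball_mem_nhds (0 : Lp ℝ 2 (volume.restrict 𝒪)) hc] with k hk
      rw [mem_ball_zero_iff] at hk
      have h2 : (0:ℝ) ≤ ‖k‖ := norm_nonneg k
      rw [Real.norm_eq_abs, Real.norm_eq_abs, abs_of_nonneg (by positivity),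
        abs_of_nonneg h2]
      nlinarith
    exact h1.trans_isBigO ((Asymptotics.isBigO_refl (fun k : Lp ℝ 2 (volume.restrict 𝒪) => k) _).norm_left)
  exact hO.trans_isLittleO ho
end

section
/- Suppose there exist constants c ≥ 0 and θ ∈ (0,1) such that for every bounded Lipschitz function φ : S → ℝ, every n ∈ ℕ and all x, y ∈ S, |∫ φ d(κⁿ(x)) − ∫ φ d(κⁿ(y))| ≤ c·θⁿ·Lip(φ)·d(x,y). Then κ admits at most one invariant probability measure. -/
open MeasureTheory ProbabilityTheory
open Metric

/-- The `n`-fold iterate of a Markov kernel, started at `x`: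
`kiter κ 0 x = δ_x` and `kiter κ (n+1) x = (kiter κ n x).bind κ`. -/
noncomputable def kiter {S : Type*} [MeasurableSpace S] (κ : Kernel S S) :
    ℕ → S → Measure S
  | 0, x => Measure.dirac x
  | (n + 1), x => (kiter κ n x).bind (fun y => κ y)

/-- A probability measure `μ` is invariant for the Markov kernel `κ` if
`∫ κ(x)(A) μ(dx) = μ(A)` for every measurable set `A`. -/
def Invariant {S : Type*} [MeasurableSpace S] (κ : Kernel S S) (μ : Measure S) : Prop :=
  ∀ A : Set S, MeasurableSet A → ∫⁻ x, κ x A ∂μ = μ A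

lemma kiter_meas {S : Type*} [MeasurableSpace S] (κ : Kernel S S) (n : ℕ) :
    Measurable (kiter κ n) := by
  induction n with
  | zero => exact Measure.measurable_dirac
  | succ n ih => exact (Measure.measurable_bind' κ.measurable).comp ih

instance kiter_prob {S : Type*} [MeasurableSpace S] (κ : Kernel S S) [IsMarkovKernel κ]
    (n : ℕ) (x : S) : IsProbabilityMeasure (kiter κ n x) := by
  induction n with
  | zero => exact Measure.dirac.isProbabilityMeasure
  | succ n ih =>
    constructor
    rw [show kiter κ (n+1) x = (kiter κ n x).bind (fun y => κ y) from rfl,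
      Measure.bind_apply MeasurableSet.univ κ.measurable.aemeasurable]
    simp [measure_univ]

lemma invariant_bind {S : Type*} [MeasurableSpace S] (κ : Kernel S S) (μ : Measure S)
    (hμ : Invariant κ μ) (n : ℕ) : μ.bind (kiter κ n) = μ := by
  induction n with
  | zero =>
    have : kiter κ 0 = fun x : S => Measure.dirac x := rfl
    rw [this, Measure.bind_dirac]
  | succ n ih =>
    have h1 : kiter κ (n+1) = fun x => (kiter κ n x).bind (fun y => κ y) := rfl
    rw [h1, ← Measure.bind_bind (kiter_meas κ n).aemeasurable κ.measurable.aemeasurable, ih]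
    ext A hA
    rw [Measure.bind_apply hA κ.measurable.aemeasurable]
    exact hμ A hA

lemma int_bind_eq {S : Type*} [MeasurableSpace S] (κ : Kernel S S) [IsMarkovKernel κ]
    (μ : Measure S) [IsProbabilityMeasure μ] (hμ : Invariant κ μ) (ψ : S → ℝ)
    (hm : Measurable ψ) (h0 : ∀ z, 0 ≤ ψ z) (M : ℝ) (hM : ∀ z, ψ z ≤ M) (n : ℕ) :
    ∫ z, ψ z ∂μ = ∫ x, ∫ z, ψ z ∂(kiter κ n x) ∂μ := by
  set g := fun x => ∫⁻ z, ENNReal.ofReal (ψ z) ∂(kiter κ n x) with hg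
  have hmg : Measurable g :=
    (Measure.measurable_lintegral hm.ennreal_ofReal).comp (kiter_meas κ n)
  have hgle : ∀ x, g x ≤ ENNReal.ofReal M := by
    intro x
    calc g x ≤ ∫⁻ _, ENNReal.ofReal M ∂(kiter κ n x) :=
          lintegral_mono fun z => ENNReal.ofReal_le_ofReal (hM z)
      _ = ENNReal.ofReal M := by simp [measure_univ]
  have hint : ∀ (ν : Measure S), ∫ z, ψ z ∂ν = (∫⁻ z, ENNReal.ofReal (ψ z) ∂ν).toReal :=
    fun ν => integral_eq_lintegral_of_nonneg_ae (Filter.Eventually.of_forall h0)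
      hm.aestronglyMeasurable
  calc ∫ z, ψ z ∂μ = (∫⁻ z, ENNReal.ofReal (ψ z) ∂μ).toReal := hint μ
    _ = (∫⁻ z, ENNReal.ofReal (ψ z) ∂(μ.bind (kiter κ n))).toReal := by
        rw [invariant_bind κ μ hμ n]
    _ = (∫⁻ x, g x ∂μ).toReal := by
        rw [Measure.lintegral_bind (kiter_meas κ n).aemeasurable hm.ennreal_ofReal.aemeasurable]
    _ = ∫ x, (g x).toReal ∂μ :=
        (integral_toReal hmg.aemeasurable (Filter.Eventually.of_forall fun x =>
          lt_of_le_of_lt (hgle x) ENNReal.ofReal_lt_top)).symm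
    _ = ∫ x, ∫ z, ψ z ∂(kiter κ n x) ∂μ :=
        integral_congr_ae (Filter.Eventually.of_forall fun x => (hint (kiter κ n x)).symm)

lemma meas_int_kiter {S : Type*} [MeasurableSpace S] (κ : Kernel S S)
    (ψ : S → ℝ) (hm : Measurable ψ) (h0 : ∀ z, 0 ≤ ψ z) (n : ℕ) :
    Measurable fun x => ∫ z, ψ z ∂(kiter κ n x) := by
  have hrw : (fun x => ∫ z, ψ z ∂(kiter κ n x)) =
      fun x => (∫⁻ z, ENNReal.ofReal (ψ z) ∂(kiter κ n x)).toReal := by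
    funext x
    exact integral_eq_lintegral_of_nonneg_ae (Filter.Eventually.of_forall h0)
      hm.aestronglyMeasurable
  rw [hrw]
  exact ((Measure.measurable_lintegral hm.ennreal_ofReal).comp (kiter_meas κ n)).ennreal_toReal
lemma lip_phi {S : Type*} [MetricSpace S] (F : Set S) (k : ℕ) :
    LipschitzWith k (fun x => max (1 - (k:ℝ) * infDist x F) 0) := by
  have l1 : LipschitzWith 1 (fun x : S => infDist x F) := lipschitz_infDist_pt F
  have l2 : LipschitzWith k (fun x : S => (k:ℝ) * infDist x F) := by
    have := (lipschitzWith_smul (k:ℝ) (β := ℝ)).comp l1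
    simpa [smul_eq_mul, Function.comp_def] using this
  have l3 : LipschitzWith k (fun x : S => 1 - (k:ℝ) * infDist x F) := by
    have := (LipschitzWith.const (α := S) (1:ℝ)).sub l2
    simpa using this
  exact l3.max_const 0

lemma ext_of_lip {S : Type*} [MetricSpace S] [MeasurableSpace S] [BorelSpace S]
    (μ ν : Measure S) [IsProbabilityMeasure μ] [IsProbabilityMeasure ν]
    (h : ∀ (φ : S → ℝ) (K : NNReal), (∃ Cb : ℝ, ∀ z, |φ z| ≤ Cb) → LipschitzWith K φ →
      ∫ z, φ z ∂μ = ∫ z, φ z ∂ν) : μ = ν := by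
  have key : ∀ F : Set S, IsClosed F → μ F = ν F := by
    intro F hF
    rcases F.eq_empty_or_nonempty with rfl | hFne
    · simp
    set φ : ℕ → S → ℝ := fun k x => max (1 - (k:ℝ) * infDist x F) 0 with hφ
    have hbd : ∀ k z, |φ k z| ≤ 1 := by
      intro k z
      rw [abs_le]
      refine ⟨le_trans (by norm_num) (le_max_right _ _), ?_⟩
      have h0 : (0:ℝ) ≤ (k:ℝ) * infDist z F :=
        mul_nonneg (Nat.cast_nonneg k) infDist_nonneg
      exact max_le (by linarith) zero_le_one
    have heq : ∀ k : ℕ, ∫ z, φ k z ∂μ = ∫ z, φ k z ∂ν :=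
      fun k => h (φ k) k ⟨1, hbd k⟩ (lip_phi F k)
    have hptw : ∀ x, Filter.Tendsto (fun k => φ k x) Filter.atTop
        (nhds ((F.indicator 1 : S → ℝ) x)) := by
      intro x
      by_cases hx : x ∈ F
      · have hc : ∀ k, φ k x = 1 := by
          intro k; simp [hφ, infDist_zero_of_mem hx]
        simp only [hc, hx, Set.indicator_of_mem]
        exact tendsto_const_nhds
      · have hd : 0 < infDist x F := (hF.notMem_iff_infDist_pos hFne).1 hx
        have hev : ∀ᶠ k : ℕ in Filter.atTop, φ k x = 0 := by
          filter_upwards [Filter.eventually_ge_atTop ⌈1 / infDist x F⌉₊] with k hk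
          have h1 : 1 / infDist x F ≤ (k:ℝ) := le_trans (Nat.le_ceil _) (Nat.cast_le.2 hk)
          have h2 : 1 ≤ (k:ℝ) * infDist x F := by
            rw [div_le_iff₀ hd] at h1; linarith
          simp only [hφ, max_eq_right_iff]
          linarith
        simp only [hx, Set.indicator_of_notMem, not_false_iff]
        exact Filter.Tendsto.congr' (hev.mono fun k hk => hk.symm) tendsto_const_nhds
    have hmeasφ : ∀ k, Continuous (φ k) := fun k => (lip_phi F k).continuous
    have htμ : Filter.Tendsto (fun k => ∫ z, φ k z ∂μ) Filter.atTop
        (nhds (∫ z, (F.indicator 1 : S → ℝ) z ∂μ)) := by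
      apply tendsto_integral_of_dominated_convergence (fun _ => (1:ℝ))
      · exact fun k => ((hmeasφ k).aestronglyMeasurable)
      · exact integrable_const 1
      · intro k
        filter_upwards with z using by rw [Real.norm_eq_abs]; exact hbd k z
      · filter_upwards with x using hptw x
    have htν : Filter.Tendsto (fun k => ∫ z, φ k z ∂ν) Filter.atTop
        (nhds (∫ z, (F.indicator 1 : S → ℝ) z ∂ν)) := by
      apply tendsto_integral_of_dominated_convergence (fun _ => (1:ℝ))
      · exact fun k => ((hmeasφ k).aestronglyMeasurable)
      · exact integrable_const 1
      · intro k
        filter_upwards with z using by rw [Real.norm_eq_abs]; exact hbd k z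
      · filter_upwards with x using hptw x
    have hind : ∫ z, (F.indicator 1 : S → ℝ) z ∂μ = ∫ z, (F.indicator 1 : S → ℝ) z ∂ν := by
      refine tendsto_nhds_unique ?_ htν
      simpa only [heq] using htμ
    rw [integral_indicator_one hF.measurableSet, integral_indicator_one hF.measurableSet] at hind
    exact (ENNReal.toReal_eq_toReal_iff' (measure_ne_top μ F) (measure_ne_top ν F)).1 hind
  apply ext_of_generate_finite _ ?_ isPiSystem_isClosed (fun F hF => key F hF) (key _ isClosed_univ)
  rw [BorelSpace.measurable_eq (α := S), borel_eq_generateFrom_isClosed]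

/-- If there are `c ≥ 0` and `θ ∈ (0,1)` such that for every bounded
Lipschitz `φ`, all `n` and all `x, y`,
`|∫ φ d(κⁿ(x)) − ∫ φ d(κⁿ(y))| ≤ c·θⁿ·Lip(φ)·d(x,y)`, then `κ` admits at most one
invariant probability measure. -/
theorem stmt10
    {S : Type*} [MetricSpace S] [CompleteSpace S] [TopologicalSpace.SeparableSpace S]
    [MeasurableSpace S] [BorelSpace S]
    (κ : Kernel S S) [IsMarkovKernel κ]
    (c θ : ℝ) (hc : 0 ≤ c) (hθ : θ ∈ Set.Ioo (0 : ℝ) 1)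
    (hcontr : ∀ (φ : S → ℝ) (K : NNReal), (∃ Cb : ℝ, ∀ z, |φ z| ≤ Cb) →
      LipschitzWith K φ → ∀ (n : ℕ) (x y : S),
        |(∫ z, φ z ∂(kiter κ n x)) - ∫ z, φ z ∂(kiter κ n y)| ≤
          c * θ ^ n * K * dist x y) :
    ∀ μ₁ μ₂ : Measure S, IsProbabilityMeasure μ₁ → IsProbabilityMeasure μ₂ →
      Invariant κ μ₁ → Invariant κ μ₂ → μ₁ = μ₂ := by
  intro μ₁ μ₂ h1 h2 hi1 hi2
  haveI := UniformSpace.secondCountable_of_separable S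
  apply ext_of_lip μ₁ μ₂
  rintro φ K ⟨Cb, hCb⟩ hK
  set C : ℝ := max Cb 0 with hC
  have hC0 : 0 ≤ C := le_max_right _ _
  have hCb' : ∀ z, |φ z| ≤ C := fun z => (hCb z).trans (le_max_left _ _)
  set ψ : S → ℝ := fun z => φ z + C with hψ
  have hψm : Measurable ψ := (hK.continuous.add continuous_const).measurable
  have hψ0 : ∀ z, 0 ≤ ψ z := by
    intro z
    have := abs_le.1 (hCb' z)
    simp only [hψ]; linarith [this.1]
  have hψM : ∀ z, ψ z ≤ 2 * C := by
    intro z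
    have := abs_le.1 (hCb' z)
    simp only [hψ]; linarith [this.2]
  -- F' n x = ∫ ψ d(kiter κ n x)
  set F : ℕ → S → ℝ := fun n x => ∫ z, ψ z ∂(kiter κ n x) with hF
  have hFmeas : ∀ n, Measurable (F n) := fun n => meas_int_kiter κ ψ hψm hψ0 n
  have hψint : ∀ (ν : Measure S) [IsProbabilityMeasure ν], Integrable ψ ν := by
    intro ν _
    refine (integrable_const (2 * C)).mono' hψm.aestronglyMeasurable ?_
    filter_upwards with z
    rw [Real.norm_eq_abs, abs_of_nonneg (hψ0 z)]
    exact hψM z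
  have hφint : ∀ (ν : Measure S) [IsProbabilityMeasure ν], Integrable φ ν := by
    intro ν _
    refine (integrable_const C).mono' hK.continuous.aestronglyMeasurable ?_
    filter_upwards with z using (hCb' z)
  -- ∫ ψ dν = ∫ φ dν + C for probability ν
  have hshift : ∀ (ν : Measure S) [IsProbabilityMeasure ν],
      ∫ z, ψ z ∂ν = (∫ z, φ z ∂ν) + C := by
    intro ν _
    rw [hψ]
    rw [integral_add (hφint ν) (integrable_const C), integral_const]
    simp [measure_univ]
  -- F bounds
  have hF0 : ∀ n x, 0 ≤ F n x := fun n x => integral_nonneg (hψ0)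
  have hFle : ∀ n x, F n x ≤ 2 * C := by
    intro n x
    calc F n x ≤ ∫ _, 2 * C ∂(kiter κ n x) :=
          integral_mono (hψint _) (integrable_const _) hψM
      _ = 2 * C := by simp [measure_univ]
  -- contraction for F
  have hFcontr : ∀ n x y, |F n x - F n y| ≤ c * θ ^ n * K * dist x y := by
    intro n x y
    have hx := hshift (kiter κ n x)
    have hy := hshift (kiter κ n y)
    have : F n x - F n y = (∫ z, φ z ∂(kiter κ n x)) - ∫ z, φ z ∂(kiter κ n y) := by
      rw [hF]; simp only; rw [hx, hy]; ring
    rw [this]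
    exact hcontr φ K ⟨Cb, hCb⟩ hK n x y
  -- invariance: ∫ φ dμᵢ = ∫ F n dμᵢ
  have hinv : ∀ (ν : Measure S) [IsProbabilityMeasure ν], Invariant κ ν →
      ∀ n, ∫ z, φ z ∂ν = (∫ x, F n x ∂ν) - C := by
    intro ν _ hiν n
    have h := int_bind_eq κ ν hiν ψ hψm hψ0 (2 * C) hψM n
    rw [hshift ν] at h
    linarith [h]
  -- product split
  have hFint1 : ∀ n, Integrable (fun p : S × S => F n p.1) (μ₁.prod μ₂) := by
    intro n
    refine (integrable_const (2 * C)).mono'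
      (((hFmeas n).comp measurable_fst).aestronglyMeasurable) ?_
    filter_upwards with p
    rw [Real.norm_eq_abs, abs_of_nonneg (hF0 n p.1)]
    exact hFle n p.1
  have hFint2 : ∀ n, Integrable (fun p : S × S => F n p.2) (μ₁.prod μ₂) := by
    intro n
    refine (integrable_const (2 * C)).mono'
      (((hFmeas n).comp measurable_snd).aestronglyMeasurable) ?_
    filter_upwards with p
    rw [Real.norm_eq_abs, abs_of_nonneg (hF0 n p.2)]
    exact hFle n p.2
  have hsplit : ∀ n, (∫ x, F n x ∂μ₁) - (∫ y, F n y ∂μ₂) =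
      ∫ p, (F n p.1 - F n p.2) ∂(μ₁.prod μ₂) := by
    intro n
    rw [integral_sub (hFint1 n) (hFint2 n), integral_fun_fst, integral_fun_snd]
    simp [measure_univ]
  -- the dominating sequence
  set G : ℕ → S × S → ℝ := fun n p => min (2 * C) (c * θ ^ n * K * dist p.1 p.2) with hG
  have hGcont : ∀ n, Continuous (G n) := by
    intro n
    exact continuous_const.min (continuous_const.mul (continuous_fst.dist continuous_snd))
  have hG0 : ∀ n p, 0 ≤ G n p := by
    intro n p
    refine le_min (by linarith) ?_
    exact mul_nonneg (mul_nonneg (mul_nonneg hc (pow_nonneg hθ.1.le n)) K.coe_nonneg) dist_nonneg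
  have hGle : ∀ n p, G n p ≤ 2 * C := fun n p => min_le_left _ _
  have hGint : ∀ n, Integrable (G n) (μ₁.prod μ₂) := by
    intro n
    refine (integrable_const (2 * C)).mono' (hGcont n).aestronglyMeasurable ?_
    filter_upwards with p
    rw [Real.norm_eq_abs, abs_of_nonneg (hG0 n p)]
    exact hGle n p
  -- the pointwise domination
  have hdom : ∀ n (p : S × S), |F n p.1 - F n p.2| ≤ G n p := by
    intro n p
    refine le_min ?_ (hFcontr n p.1 p.2)
    have h1 := hF0 n p.1; have h2 := hF0 n p.2
    have h3 := hFle n p.1; have h4 := hFle n p.2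
    rw [abs_sub_le_iff]; constructor <;> linarith
  -- main bound
  have hbound : ∀ n, |(∫ z, φ z ∂μ₁) - ∫ z, φ z ∂μ₂| ≤ ∫ p, G n p ∂(μ₁.prod μ₂) := by
    intro n
    have e1 := hinv μ₁ hi1 n
    have e2 := hinv μ₂ hi2 n
    have : (∫ z, φ z ∂μ₁) - ∫ z, φ z ∂μ₂ = (∫ x, F n x ∂μ₁) - ∫ y, F n y ∂μ₂ := by
      rw [e1, e2]; ring
    rw [this, hsplit n]
    calc |∫ p, (F n p.1 - F n p.2) ∂(μ₁.prod μ₂)|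
        ≤ ∫ p, |F n p.1 - F n p.2| ∂(μ₁.prod μ₂) := by
          simpa [Real.norm_eq_abs] using
            norm_integral_le_integral_norm (μ := μ₁.prod μ₂) (fun p => F n p.1 - F n p.2)
      _ ≤ ∫ p, G n p ∂(μ₁.prod μ₂) := by
          refine integral_mono (((hFint1 n).sub (hFint2 n)).abs) (hGint n) ?_
          intro p
          exact hdom n p
  -- the bound tends to zero
  have hθ0 : Filter.Tendsto (fun n => θ ^ n) Filter.atTop (nhds 0) :=
    tendsto_pow_atTop_nhds_zero_of_lt_one hθ.1.le hθ.2
  have hGtend : Filter.Tendsto (fun n => ∫ p, G n p ∂(μ₁.prod μ₂)) Filter.atTop (nhds 0) := by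
    have h0int : (0:ℝ) = ∫ _p, (0:ℝ) ∂(μ₁.prod μ₂) := by simp
    rw [h0int]
    apply tendsto_integral_of_dominated_convergence (fun _ => 2 * C)
    · exact fun n => (hGcont n).aestronglyMeasurable
    · exact integrable_const _
    · intro n
      filter_upwards with p
      rw [Real.norm_eq_abs, abs_of_nonneg (hG0 n p)]
      exact hGle n p
    · filter_upwards with p
      have hlim : Filter.Tendsto (fun n => c * θ ^ n * K * dist p.1 p.2)
          Filter.atTop (nhds 0) := by
        have : Filter.Tendsto (fun n => θ ^ n * (c * K * dist p.1 p.2))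
            Filter.atTop (nhds (0 * (c * K * dist p.1 p.2))) :=
          hθ0.mul_const _
        simpa [mul_comm, mul_assoc, mul_left_comm] using this
      have := (tendsto_const_nhds (x := (2*C : ℝ)) (f := Filter.atTop (α := ℕ))).min hlim
      simpa [min_eq_right (by linarith : (0:ℝ) ≤ 2 * C)] using this
  -- conclude
  have habs : |(∫ z, φ z ∂μ₁) - ∫ z, φ z ∂μ₂| ≤ 0 :=
    ge_of_tendsto' hGtend fun n => hbound n
  exact sub_eq_zero.1 (abs_eq_zero.1 (le_antisymm habs (abs_nonneg _)))
end

section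
/- Suppose there exist constants c ≥ 0 and θ ∈ (0,1) such that for every bounded Lipschitz function φ : S → ℝ, every n ∈ ℕ and all x, y ∈ S, |∫ φ d(κⁿ(x)) − ∫ φ d(κⁿ(y))| ≤ c·θⁿ·Lip(φ)·d(x,y), and let μ be an invariant probability measure for κ such that ∫ d(x,y) μ(dy) < ∞ for a given x ∈ S. Then for every bounded Lipschitz function φ : S → ℝ and every n ∈ ℕ, |∫ φ d(κⁿ(x)) − ∫ φ dμ| ≤ c·θⁿ·Lip(φ)·∫ d(x,y) μ(dy). -/
open MeasureTheory ProbabilityTheory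

section Aux

variable {S : Type*} [MeasurableSpace S]

/-- The `n`-fold iterate of a kernel, as a kernel. -/
noncomputable def iterK (κ : Kernel S S) : ℕ → Kernel S S
  | 0 => Kernel.id
  | (n + 1) => κ ∘ₖ iterK κ n

instance iterK_markov (κ : Kernel S S) [IsMarkovKernel κ] (n : ℕ) :
    IsMarkovKernel (iterK κ n) := by
  induction n with
  | zero => rw [iterK]; infer_instance
  | succ n ih => rw [iterK]; infer_instance

lemma kiter_eq_iterK (κ : Kernel S S) (n : ℕ) (x : S) : kiter κ n x = iterK κ n x := by
  induction n with
  | zero => rw [kiter, iterK, Kernel.id_apply]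
  | succ n ih => rw [kiter, iterK, Kernel.comp_apply, ih]

lemma kiter_prob_s11 (κ : Kernel S S) [IsMarkovKernel κ] (n : ℕ) (x : S) :
    IsProbabilityMeasure (kiter κ n x) := by
  rw [kiter_eq_iterK]; infer_instance

/-- integral over bind for nonneg bounded measurable function -/
lemma integral_bind_nonneg (μ : Measure S) [IsProbabilityMeasure μ]
    (m : Kernel S S) [IsMarkovKernel m] (f : S → ℝ) (hfm : Measurable f)
    (hf0 : ∀ z, 0 ≤ f z) (Cb : ℝ) (hb : ∀ z, f z ≤ Cb) :
    ∫ z, f z ∂(μ.bind m) = ∫ y, ∫ z, f z ∂(m y) ∂μ := by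
  have hInt : ∀ ν : Measure S, IsProbabilityMeasure ν → Integrable f ν := by
    intro ν hν
    refine (integrable_const Cb).mono' hfm.aestronglyMeasurable ?_
    filter_upwards with z
    rw [Real.norm_eq_abs, abs_of_nonneg (hf0 z)]; exact hb z
  have hprob : IsProbabilityMeasure (μ.bind m) := by
    constructor
    rw [Measure.bind_apply MeasurableSet.univ m.measurable.aemeasurable]
    simp
  have h1 : ∫ z, f z ∂(μ.bind m) = (∫⁻ z, ENNReal.ofReal (f z) ∂(μ.bind m)).toReal := by
    rw [integral_eq_lintegral_of_nonneg_ae (Filter.Eventually.of_forall hf0)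
      hfm.aestronglyMeasurable]
  have h2 : ∫⁻ z, ENNReal.ofReal (f z) ∂(μ.bind m)
      = ∫⁻ y, ∫⁻ z, ENNReal.ofReal (f z) ∂(m y) ∂μ :=
    Measure.lintegral_bind m.measurable.aemeasurable (hfm.ennreal_ofReal.aemeasurable)
  have h3 : ∀ y, ∫⁻ z, ENNReal.ofReal (f z) ∂(m y) = ENNReal.ofReal (∫ z, f z ∂(m y)) := by
    intro y
    rw [← ofReal_integral_eq_lintegral_ofReal (hInt _ inferInstance)
      (Filter.Eventually.of_forall hf0)]
  have hg : Measurable fun y => ∫ z, f z ∂(m y) := by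
    have : StronglyMeasurable (Function.uncurry fun (_ : S) z => f z) :=
      (hfm.stronglyMeasurable).comp_measurable measurable_snd
    exact (this.integral_kernel_prod_right (κ := m)).measurable
  have h4 : ∫ y, ∫ z, f z ∂(m y) ∂μ
      = (∫⁻ y, ENNReal.ofReal (∫ z, f z ∂(m y)) ∂μ).toReal := by
    refine integral_eq_lintegral_of_nonneg_ae (Filter.Eventually.of_forall fun y => ?_)
      hg.aestronglyMeasurable
    exact integral_nonneg hf0
  rw [h1, h2, h4]
  simp_rw [h3]

lemma integral_bind_bounded (μ : Measure S) [IsProbabilityMeasure μ]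
    (m : Kernel S S) [IsMarkovKernel m] (φ : S → ℝ) (hφm : Measurable φ)
    (Cb : ℝ) (hb : ∀ z, |φ z| ≤ Cb) :
    ∫ z, φ z ∂(μ.bind m) = ∫ y, ∫ z, φ z ∂(m y) ∂μ := by
  have hprob : IsProbabilityMeasure (μ.bind m) := by
    constructor
    rw [Measure.bind_apply MeasurableSet.univ m.measurable.aemeasurable]
    simp
  have key := integral_bind_nonneg μ m (fun z => φ z + Cb) (hφm.add_const Cb)
    (fun z => by have := (abs_le.1 (hb z)).1; linarith) (2 * Cb)
    (fun z => by have := (abs_le.1 (hb z)).2; linarith)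
  have hint : ∀ ν : Measure S, IsProbabilityMeasure ν → Integrable φ ν := by
    intro ν hν
    refine (integrable_const Cb).mono' hφm.aestronglyMeasurable ?_
    filter_upwards with z using by rw [Real.norm_eq_abs]; exact hb z
  rw [integral_add (hint _ hprob) (integrable_const Cb), integral_const] at key
  simp only [measure_univ, ENNReal.toReal_one, one_smul, smul_eq_mul, probReal_univ, one_mul] at key
  have : (fun y => ∫ z, (φ z + Cb) ∂(m y)) = fun y => (∫ z, φ z ∂(m y)) + Cb := by
    funext y
    rw [integral_add (hint _ inferInstance) (integrable_const Cb), integral_const]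
    simp
  rw [this] at key
  have hg : Measurable fun y => ∫ z, φ z ∂(m y) := by
    have : StronglyMeasurable (Function.uncurry fun (_ : S) z => φ z) :=
      (hφm.stronglyMeasurable).comp_measurable measurable_snd
    exact (this.integral_kernel_prod_right (κ := m)).measurable
  have hgInt : Integrable (fun y => ∫ z, φ z ∂(m y)) μ := by
    refine (integrable_const Cb).mono' hg.aestronglyMeasurable ?_
    filter_upwards with y
    rw [Real.norm_eq_abs, ← Real.norm_eq_abs]
    calc ‖∫ z, φ z ∂(m y)‖ ≤ Cb * ((m y) Set.univ).toReal :=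
          norm_integral_le_of_norm_le_const (Filter.Eventually.of_forall fun z => by
            rw [Real.norm_eq_abs]; exact hb z)
      _ = Cb := by simp
  rw [integral_add hgInt (integrable_const Cb), integral_const] at key
  simp only [measure_univ, ENNReal.toReal_one, one_smul, smul_eq_mul, probReal_univ, one_mul] at key
  linarith

end Aux

/-- Under the contraction assumption of Statement 10, if `μ` is an
invariant probability measure with `∫ d(x,y) μ(dy) < ∞`, then for every bounded Lipschitz
`φ` and every `n`, `|∫ φ d(κⁿ(x)) − ∫ φ dμ| ≤ c·θⁿ·Lip(φ)·∫ d(x,y) μ(dy)`. -/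
theorem stmt11
    {S : Type*} [MetricSpace S] [CompleteSpace S] [TopologicalSpace.SeparableSpace S]
    [MeasurableSpace S] [BorelSpace S]
    (κ : Kernel S S) [IsMarkovKernel κ]
    (c θ : ℝ) (hc : 0 ≤ c) (hθ : θ ∈ Set.Ioo (0 : ℝ) 1)
    (hcontr : ∀ (φ : S → ℝ) (K : NNReal), (∃ Cb : ℝ, ∀ z, |φ z| ≤ Cb) →
      LipschitzWith K φ → ∀ (n : ℕ) (x y : S),
        |(∫ z, φ z ∂(kiter κ n x)) - ∫ z, φ z ∂(kiter κ n y)| ≤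
          c * θ ^ n * K * dist x y)
    (μ : Measure S) [IsProbabilityMeasure μ] (hinv : Invariant κ μ)
    (x : S) (hint : Integrable (fun y => dist x y) μ) :
    ∀ (φ : S → ℝ) (K : NNReal), (∃ Cb : ℝ, ∀ z, |φ z| ≤ Cb) → LipschitzWith K φ →
      ∀ n : ℕ,
        |(∫ z, φ z ∂(kiter κ n x)) - ∫ z, φ z ∂μ| ≤
          c * θ ^ n * K * ∫ y, dist x y ∂μ := by
  rintro φ K ⟨Cb, hCb⟩ hLip n
  have hφm : Measurable φ := hLip.continuous.measurable
  -- invariance as a Kernel.Invariant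
  have hκinv : Kernel.Invariant κ μ := by
    refine Measure.ext fun A hA => ?_
    rw [Measure.bind_apply hA κ.measurable.aemeasurable]
    exact hinv A hA
  have hiterinv : ∀ n : ℕ, Kernel.Invariant (iterK κ n) μ := by
    intro n
    induction n with
    | zero =>
      show μ.bind _ = μ
      have : ⇑(iterK κ 0) = Measure.dirac := by
        funext a; rw [iterK, Kernel.id_apply]
      rw [this, Measure.bind_dirac]
    | succ n ih =>
      rw [iterK]
      exact Kernel.Invariant.comp hκinv ih
  -- rewrite ∫ φ dμ
  have hμeq : ∫ z, φ z ∂μ = ∫ y, ∫ z, φ z ∂(kiter κ n y) ∂μ := by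
    conv_lhs => rw [← (hiterinv n).def]
    rw [integral_bind_bounded μ (iterK κ n) φ hφm Cb hCb]
    exact integral_congr_ae (Filter.Eventually.of_forall fun y => by
      simp only [← kiter_eq_iterK])
  -- measurability / integrability of g
  have hg : Measurable fun y => ∫ z, φ z ∂(kiter κ n y) := by
    have h1 : StronglyMeasurable (Function.uncurry fun (_ : S) z => φ z) :=
      (hφm.stronglyMeasurable).comp_measurable measurable_snd
    have := (h1.integral_kernel_prod_right (κ := iterK κ n)).measurable
    convert this using 2 with y
    simp only [kiter_eq_iterK]
  have hgInt : Integrable (fun y => ∫ z, φ z ∂(kiter κ n y)) μ := by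
    refine (integrable_const Cb).mono' hg.aestronglyMeasurable ?_
    filter_upwards with y
    haveI := kiter_prob_s11 κ n y
    rw [Real.norm_eq_abs, ← Real.norm_eq_abs]
    calc ‖∫ z, φ z ∂(kiter κ n y)‖ ≤ Cb * ((kiter κ n y) Set.univ).toReal :=
          norm_integral_le_of_norm_le_const (Filter.Eventually.of_forall fun z => by
            rw [Real.norm_eq_abs]; exact hCb z)
      _ = Cb := by simp
  set A := ∫ z, φ z ∂(kiter κ n x) with hA
  have hdiff : A - ∫ z, φ z ∂μ = ∫ y, (A - ∫ z, φ z ∂(kiter κ n y)) ∂μ := by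
    rw [hμeq, integral_sub (integrable_const A) hgInt, integral_const]
    simp
  rw [hdiff]
  calc |∫ y, (A - ∫ z, φ z ∂(kiter κ n y)) ∂μ|
      ≤ ∫ y, |A - ∫ z, φ z ∂(kiter κ n y)| ∂μ := by
        rw [← Real.norm_eq_abs]
        refine (norm_integral_le_integral_norm _).trans_eq ?_
        simp [Real.norm_eq_abs]
    _ ≤ ∫ y, c * θ ^ n * K * dist x y ∂μ := by
        refine integral_mono ((integrable_const A).sub hgInt).abs (hint.const_mul _) ?_
        intro y
        exact hcontr φ K ⟨Cb, hCb⟩ hLip n x y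
    _ = c * θ ^ n * K * ∫ y, dist x y ∂μ := integral_const_mul _ _
end

section
/- Let κ be a Markov kernel on a measurable space S, let V : S → [0,∞) be measurable, and let c ≥ 0 and θ ∈ [0,1) be constants such that ∫ V(y) κ(x)(dy) ≤ c + θ·V(x) for every x ∈ S. Then every invariant probability measure μ for κ satisfies ∫ V dμ ≤ c/(1 − θ); in particular V is μ-integrable. -/
open MeasureTheory ProbabilityTheory Filter

/-- If `V : S → [0,∞)` is measurable and
`∫ V(y) κ(x)(dy) ≤ c + θ·V(x)` for all `x`, with `c ≥ 0` and `θ ∈ [0,1)`, then every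
invariant probability measure `μ` for `κ` satisfies `∫ V dμ ≤ c/(1 − θ)`; in particular
`V` is `μ`-integrable. -/
theorem stmt13
    {S : Type*} [MeasurableSpace S]
    (κ : Kernel S S) [IsMarkovKernel κ]
    (V : S → ℝ) (hV0 : ∀ x, 0 ≤ V x) (hVmeas : Measurable V)
    (c θ : ℝ) (hc : 0 ≤ c) (hθ : θ ∈ Set.Ico (0 : ℝ) 1)
    (hdrift : ∀ x : S,
      ∫⁻ y, ENNReal.ofReal (V y) ∂(κ x) ≤ ENNReal.ofReal (c + θ * V x))
    (μ : Measure S) [IsProbabilityMeasure μ] (hinv : Invariant κ μ) :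
    Integrable V μ ∧ ∫ x, V x ∂μ ≤ c / (1 - θ) := by
  obtain ⟨hθ0, hθ1⟩ := hθ
  set W : S → ENNReal := fun x => ENNReal.ofReal (V x) with hW
  have hWmeas : Measurable W := ENNReal.measurable_ofReal.comp hVmeas
  have hWfin : ∀ x, W x ≠ ⊤ := fun x => ENNReal.ofReal_ne_top
  set C : ENNReal := ENNReal.ofReal c with hC
  set Θ : ENNReal := ENNReal.ofReal θ with hΘ
  have hΘlt : Θ < 1 := by
    rw [hΘ, ← ENNReal.ofReal_one]
    exact (ENNReal.ofReal_lt_ofReal_iff one_pos).mpr hθ1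
  have hΘtop : Θ ≠ ⊤ := ENNReal.ofReal_ne_top
  have hCtop : C ≠ ⊤ := ENNReal.ofReal_ne_top
  -- drift in ℝ≥0∞ form
  have hdriftE : ∀ x, ∫⁻ y, W y ∂(κ x) ≤ C + Θ * W x := by
    intro x
    refine (hdrift x).trans_eq ?_
    rw [ENNReal.ofReal_add hc (mul_nonneg hθ0 (hV0 x)), ENNReal.ofReal_mul hθ0]
  -- invariance for lintegrals
  have hbind : μ.bind (fun x => κ x) = μ := by
    ext A hA
    rw [Measure.bind_apply hA κ.measurable.aemeasurable]
    exact hinv A hA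
  have hlint : ∀ f : S → ENNReal, Measurable f →
      ∫⁻ x, ∫⁻ y, f y ∂(κ x) ∂μ = ∫⁻ x, f x ∂μ := by
    intro f hf
    rw [← Measure.lintegral_bind κ.measurable.aemeasurable hf.aemeasurable, hbind]
  -- partial geometric sums
  set cs : ℕ → ENNReal := fun n => ∑ i ∈ Finset.range n, C * Θ ^ i with hcs
  set L : ENNReal := C * (1 - Θ)⁻¹ with hL
  have hLtop : L ≠ ⊤ := by
    apply ENNReal.mul_ne_top hCtop
    simp [ENNReal.inv_ne_top]
    exact (tsub_pos_of_lt hΘlt).ne'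
  -- key induction
  have key : ∀ (N : ENNReal) (n : ℕ),
      ∫⁻ x, min (W x) N ∂μ ≤ ∫⁻ x, min (cs n + Θ ^ n * W x) N ∂μ := by
    intro N n
    induction n with
    | zero => simp [hcs]
    | succ n ih =>
      refine ih.trans ?_
      have hmeas : Measurable fun y => min (cs n + Θ ^ n * W y) N :=
        ((measurable_const.add (hWmeas.const_mul _)).min measurable_const)
      rw [← hlint _ hmeas]
      refine lintegral_mono fun x => ?_
      have h1 : ∫⁻ y, min (cs n + Θ ^ n * W y) N ∂(κ x)
          ≤ min (∫⁻ y, (cs n + Θ ^ n * W y) ∂(κ x)) N := by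
        refine le_min (lintegral_mono fun y => min_le_left _ _) ?_
        calc ∫⁻ y, min (cs n + Θ ^ n * W y) N ∂(κ x)
            ≤ ∫⁻ _, N ∂(κ x) := lintegral_mono fun y => min_le_right _ _
          _ = N := by simp
      refine h1.trans (min_le_min ?_ le_rfl)
      rw [lintegral_add_left measurable_const, lintegral_const_mul _ hWmeas,
        lintegral_const]
      simp only [measure_univ, mul_one]
      calc cs n + Θ ^ n * ∫⁻ y, W y ∂(κ x)
          ≤ cs n + Θ ^ n * (C + Θ * W x) := by
            exact add_le_add_right (mul_le_mul_right (hdriftE x) _) _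
        _ = cs (n + 1) + Θ ^ (n + 1) * W x := by
            rw [hcs]
            simp only [Finset.sum_range_succ]
            ring
  -- the limit of the right-hand sides
  have hcs_lim : Tendsto cs atTop (nhds L) := by
    have h1 : Tendsto (fun n => ∑ i ∈ Finset.range n, Θ ^ i) atTop
        (nhds (∑' i, Θ ^ i)) := ENNReal.tendsto_nat_tsum _
    rw [ENNReal.tsum_geometric] at h1
    have := ENNReal.Tendsto.const_mul (a := C) h1 (Or.inr hCtop)
    simpa [hcs, hL, Finset.mul_sum] using this
  have trunc_le : ∀ (N : ENNReal), N ≠ ⊤ → ∫⁻ x, min (W x) N ∂μ ≤ L := by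
    intro N hN
    have hpow : Tendsto (fun n : ℕ => Θ ^ n) atTop (nhds 0) :=
      ENNReal.tendsto_pow_atTop_nhds_zero_of_lt_one hΘlt
    have hptw : ∀ x, Tendsto (fun n => min (cs n + Θ ^ n * W x) N) atTop
        (nhds (min L N)) := by
      intro x
      have h2 : Tendsto (fun n : ℕ => Θ ^ n * W x) atTop (nhds 0) := by
        simpa using ENNReal.Tendsto.mul_const hpow (Or.inr (hWfin x))
      have h3 : Tendsto (fun n => cs n + Θ ^ n * W x) atTop (nhds L) := by
        simpa using hcs_lim.add h2
      exact h3.min tendsto_const_nhds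
    have hDCT : Tendsto (fun n => ∫⁻ x, min (cs n + Θ ^ n * W x) N ∂μ) atTop
        (nhds (∫⁻ _, min L N ∂μ)) := by
      refine tendsto_lintegral_of_dominated_convergence (fun _ => N)
        (fun n => (measurable_const.add (hWmeas.const_mul _)).min measurable_const)
        (fun n => Eventually.of_forall fun x => min_le_right _ _)
        (by simp [hN]) (Eventually.of_forall hptw)
    have hlim_le : (∫⁻ _, min L N ∂μ) ≤ L := by
      simp only [lintegral_const, measure_univ, mul_one]
      exact min_le_left _ _
    exact le_trans (ge_of_tendsto' hDCT (fun n => key N n)) hlim_le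
  -- total bound
  have htot : ∫⁻ x, W x ∂μ ≤ L := by
    have hsup : ∀ x, ⨆ n : ℕ, min (W x) (n : ENNReal) = W x := by
      intro x
      apply le_antisymm (iSup_le fun n => min_le_left _ _)
      obtain ⟨n, hn⟩ := ENNReal.exists_nat_gt (hWfin x)
      exact le_iSup_of_le n (le_min le_rfl hn.le)
    have hmono : Monotone fun n : ℕ => fun x => min (W x) (n : ENNReal) := by
      intro a b hab x
      exact min_le_min le_rfl (by exact_mod_cast hab)
    calc ∫⁻ x, W x ∂μ = ∫⁻ x, ⨆ n : ℕ, min (W x) (n : ENNReal) ∂μ := by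
          simp_rw [hsup]
      _ = ⨆ n : ℕ, ∫⁻ x, min (W x) (n : ENNReal) ∂μ :=
          lintegral_iSup (fun n => hWmeas.min measurable_const) hmono
      _ ≤ L := iSup_le fun n => trunc_le n (ENNReal.natCast_ne_top n)
  have hLval : L = ENNReal.ofReal (c / (1 - θ)) := by
    rw [hL, ENNReal.ofReal_div_of_pos (by linarith), div_eq_mul_inv]
    congr 1
    rw [hΘ, ← ENNReal.ofReal_one, ← ENNReal.ofReal_sub _ hθ0]
  have htot' : ∫⁻ x, W x ∂μ ≤ ENNReal.ofReal (c / (1 - θ)) := hLval ▸ htot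
  have hint : Integrable V μ := by
    refine ⟨hVmeas.aestronglyMeasurable, ?_⟩
    rw [hasFiniteIntegral_iff_ofReal (Eventually.of_forall hV0)]
    exact lt_of_le_of_lt htot' ENNReal.ofReal_lt_top
  refine ⟨hint, ?_⟩
  rw [integral_eq_lintegral_of_nonneg_ae (Eventually.of_forall hV0)
    hVmeas.aestronglyMeasurable]
  calc (∫⁻ x, W x ∂μ).toReal ≤ (ENNReal.ofReal (c / (1 - θ))).toReal :=
        ENNReal.toReal_mono ENNReal.ofReal_ne_top htot'
    _ = c / (1 - θ) := ENNReal.toReal_ofReal (div_nonneg hc (by linarith))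
end
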